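/- For the logistic map g_α : ℝ → ℝ, g_α(x) = α·x·(1 − x), with control parameter α ∈ (1, 3): for every x₀ ∈ ℝ, the iterates g_α^[k](x₀) tend to (α − 1)/α as k → ∞ if and only if x₀ ∈ (0, 1). In other words, the domain of attraction of the asymptotically stable steady state (α − 1)/α of the system x_{k+1} = α·x_k·(1 − x_k) is exactly the open interval (0, 1). -/

import Mathlib

open Filter Topology

private lemma lgc_even_odd {u : ℕ → ℝ} {L : ℝ}
    (he : Tendsto (fun n => u (2 * n)) atTop (𝓝 L))
    (ho : Tendsto (fun n => u (2 * n + 1)) atTop (𝓝 L)) :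
    Tendsto u atTop (𝓝 L) := by
  rw [Metric.tendsto_atTop] at he ho ⊢
  intro ε hε
  obtain ⟨N₁, h₁⟩ := he ε hε
  obtain ⟨N₂, h₂⟩ := ho ε hε
  refine ⟨2 * N₁ + 2 * N₂ + 1, fun n hn => ?_⟩
  rcases Nat.even_or_odd n with ⟨m, hm⟩ | ⟨m, hm⟩
  · have h2m : n = 2 * m := by omega
    have : m ≥ N₁ := by omega
    simpa [← h2m] using h₁ m this
  · have h2m : n = 2 * m + 1 := by omega
    have : m ≥ N₂ := by omega
    simpa [← h2m] using h₂ m this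

/-- monotone bounded orbit converges to a fixed point -/
private lemma lgc_conv_mono {f : ℝ → ℝ} (hf : Continuous f) (u : ℕ → ℝ)
    (hu : ∀ n, u (n + 1) = f (u n)) (hm : Monotone u) (B : ℝ) (hB : ∀ n, u n ≤ B) :
    ∃ L, Tendsto u atTop (𝓝 L) ∧ f L = L ∧ u 0 ≤ L ∧ L ≤ B := by
  have hbdd : BddAbove (Set.range u) := ⟨B, by rintro _ ⟨n, rfl⟩; exact hB n⟩
  have ht : Tendsto u atTop (𝓝 (⨆ n, u n)) := tendsto_atTop_ciSup hm hbdd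
  set L := ⨆ n, u n with hL
  have h1 : Tendsto (fun n => u (n + 1)) atTop (𝓝 L) := ht.comp (tendsto_add_atTop_nat 1)
  have h2 : Tendsto (fun n => f (u n)) atTop (𝓝 (f L)) := (hf.tendsto L).comp ht
  rw [funext hu] at h1
  have hfix : f L = L := tendsto_nhds_unique h2 h1
  exact ⟨L, ht, hfix, le_ciSup hbdd 0, ciSup_le hB⟩

private lemma lgc_conv_anti {f : ℝ → ℝ} (hf : Continuous f) (u : ℕ → ℝ)
    (hu : ∀ n, u (n + 1) = f (u n)) (hm : Antitone u) (B : ℝ) (hB : ∀ n, B ≤ u n) :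
    ∃ L, Tendsto u atTop (𝓝 L) ∧ f L = L ∧ B ≤ L ∧ L ≤ u 0 := by
  have hbdd : BddBelow (Set.range u) := ⟨B, by rintro _ ⟨n, rfl⟩; exact hB n⟩
  have ht : Tendsto u atTop (𝓝 (⨅ n, u n)) := tendsto_atTop_ciInf hm hbdd
  set L := ⨅ n, u n with hL
  have h1 : Tendsto (fun n => u (n + 1)) atTop (𝓝 L) := ht.comp (tendsto_add_atTop_nat 1)
  have h2 : Tendsto (fun n => f (u n)) atTop (𝓝 (f L)) := (hf.tendsto L).comp ht
  rw [funext hu] at h1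
  have hfix : f L = L := tendsto_nhds_unique h2 h1
  exact ⟨L, ht, hfix, le_ciInf hB, ciInf_le hbdd 0⟩

/-- positive fixed points of the logistic map -/
private lemma lgc_fix (α : ℝ) (h1 : 1 < α) {L : ℝ} (hL : 0 < L)
    (hfix : α * L * (1 - L) = L) : L = (α - 1) / α := by
  have key : L * (α - α * L - 1) = 0 := by linear_combination hfix
  have h0 : α - α * L - 1 = 0 := by
    rcases mul_eq_zero.mp key with h | h
    · exact absurd h (ne_of_gt hL)
    · exact h
  have hα : α ≠ 0 := by linarith
  field_simp
  linarith

/-- positive fixed points of the second iterate of the logistic map, for α < 3 -/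
private lemma lgc_fix2 (α : ℝ) (h1 : 1 < α) (h3 : α < 3) {L : ℝ} (hL : 0 < L)
    (hfix : α * (α * L * (1 - L)) * (1 - α * L * (1 - L)) = L) : L = (α - 1) / α := by
  have hQ : 0 < α ^ 2 * L ^ 2 - (α ^ 2 + α) * L + (α + 1) := by
    nlinarith [sq_nonneg (2 * α * L - α - 1)]
  have key : L * (α * L - α + 1) * (α ^ 2 * L ^ 2 - (α ^ 2 + α) * L + (α + 1)) = 0 := by
    linear_combination -hfix
  have h0 : α * L - α + 1 = 0 := by
    rcases mul_eq_zero.mp key with h | h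
    · rcases mul_eq_zero.mp h with h' | h'
      · exact absurd h' (ne_of_gt hL)
      · exact h'
    · exact absurd h (ne_of_gt hQ)
  have hα : α ≠ 0 := by linarith
  field_simp
  linarith

/-- the key convergence lemma on an invariant interval where the second iterate is monotone -/
private lemma lgc_main (α : ℝ) (h1 : 1 < α) (h3 : α < 3) (a b : ℝ)
    (ha0 : 0 < a) (hhalf : b ≤ 1 / 2 ∨ 1 / 2 ≤ a)
    (hinv : ∀ x ∈ Set.Icc a b, (α * x * (1 - x)) ∈ Set.Icc a b)
    (x : ℝ) (hx : x ∈ Set.Icc a b) :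
    Tendsto (fun k => (fun x => α * x * (1 - x))^[k] x) atTop (𝓝 ((α - 1) / α)) := by
  set g : ℝ → ℝ := fun x => α * x * (1 - x) with hg
  set h : ℝ → ℝ := fun x => g (g x) with hh
  have hgc : Continuous g := by fun_prop
  have hhc : Continuous h := hgc.comp hgc
  -- monotonicity of h on [a,b]
  have hmono : ∀ u ∈ Set.Icc a b, ∀ v ∈ Set.Icc a b, u ≤ v → h u ≤ h v := by
    intro u hu v hv huv
    have hgu : g u ∈ Set.Icc a b := hinv u hu
    have hgv : g v ∈ Set.Icc a b := hinv v hv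
    have e1 : g v - g u = α * (v - u) * (1 - (u + v)) := by simp only [hg]; ring
    have e2 : h v - h u = α * (g v - g u) * (1 - (g u + g v)) := by simp only [hh, hg]; ring
    rcases hhalf with hc | hc
    · have f1 : 0 ≤ 1 - (u + v) := by
        have := hu.2; have := hv.2; linarith
      have f2 : 0 ≤ 1 - (g u + g v) := by
        have := hgu.2; have := hgv.2; linarith
      have hguv : 0 ≤ g v - g u := by
        rw [e1]
        exact mul_nonneg (mul_nonneg (by linarith) (by linarith)) f1
      have : 0 ≤ h v - h u := by
        rw [e2]
        exact mul_nonneg (mul_nonneg (by linarith) hguv) f2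
      linarith
    · have f1 : 0 ≤ (u + v) - 1 := by
        have := hu.1; have := hv.1; linarith
      have f2 : 0 ≤ (g u + g v) - 1 := by
        have := hgu.1; have := hgv.1; linarith
      have e2' : h v - h u = α * (g u - g v) * ((g u + g v) - 1) := by
        simp only [hh, hg]; ring
      have hgvu : g u - g v = α * (v - u) * ((u + v) - 1) := by simp only [hg]; ring
      have hguv : 0 ≤ g u - g v := by
        rw [hgvu]
        exact mul_nonneg (mul_nonneg (by linarith) (by linarith)) f1
      have : 0 ≤ h v - h u := by
        rw [e2']
        exact mul_nonneg (mul_nonneg (by linarith) hguv) f2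
      linarith
  -- h-orbit from any point of [a,b] converges to p
  have key : ∀ y ∈ Set.Icc a b, Tendsto (fun j => h^[j] y) atTop (𝓝 ((α - 1) / α)) := by
    intro y hy
    set e : ℕ → ℝ := fun j => h^[j] y with he
    have hmem : ∀ j, e j ∈ Set.Icc a b := by
      intro j
      induction j with
      | zero => simpa [he] using hy
      | succ j ih =>
        have : e (j + 1) = g (g (e j)) := by
          simp only [he, Function.iterate_succ_apply', hh]
        rw [this]
        exact hinv _ (hinv _ ih)
    have hsucc : ∀ j, e (j + 1) = h (e j) := fun j => by
      simp only [he, Function.iterate_succ_apply']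
    have hfixL : ∀ L : ℝ, h L = L → 0 < L → L = (α - 1) / α := by
      intro L hfixx hLpos
      exact lgc_fix2 α h1 h3 hLpos (by simpa [hh, hg] using hfixx)
    rcases le_total (e 0) (e 1) with hcmp | hcmp
    · have hstep : ∀ j, e j ≤ e (j + 1) := by
        intro j
        induction j with
        | zero => exact hcmp
        | succ j ih =>
          have := hmono _ (hmem j) _ (hmem (j + 1)) ih
          rw [← hsucc j, ← hsucc (j + 1)] at this
          exact this
      have hm : Monotone e := monotone_nat_of_le_succ hstep
      obtain ⟨L, hL, hfixx, hL0, hLb⟩ := lgc_conv_mono hhc e hsucc hm b (fun n => (hmem n).2)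
      have hLpos : 0 < L := lt_of_lt_of_le ha0 (le_trans (hmem 0).1 hL0)
      rwa [hfixL L hfixx hLpos] at hL
    · have hstep : ∀ j, e (j + 1) ≤ e j := by
        intro j
        induction j with
        | zero => exact hcmp
        | succ j ih =>
          have := hmono _ (hmem (j + 1)) _ (hmem j) ih
          rw [← hsucc j, ← hsucc (j + 1)] at this
          exact this
      have hm : Antitone e := antitone_nat_of_succ_le hstep
      obtain ⟨L, hL, hfixx, hLa, hLb⟩ := lgc_conv_anti hhc e hsucc hm a (fun n => (hmem n).1)
      have hLpos : 0 < L := lt_of_lt_of_le ha0 hLa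
      rwa [hfixL L hfixx hLpos] at hL
  -- combine even and odd subsequences
  have h2j : ∀ (j : ℕ) (y : ℝ), g^[2 * j] y = h^[j] y := by
    intro j y
    rw [Function.iterate_mul]
    rfl
  have heven : Tendsto (fun j => g^[2 * j] x) atTop (𝓝 ((α - 1) / α)) := by
    have := key x hx
    simpa [h2j] using this
  have hodd : Tendsto (fun j => g^[2 * j + 1] x) atTop (𝓝 ((α - 1) / α)) := by
    have := key (g x) (hinv x hx)
    have heq : ∀ j, g^[2 * j + 1] x = h^[j] (g x) := by
      intro j
      rw [Function.iterate_succ_apply, h2j]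
    simpa [heq] using this
  exact lgc_even_odd heven hodd

set_option maxHeartbeats 1000000 in
theorem logistic_domain_of_attraction (α : ℝ) (hα : α ∈ Set.Ioo (1 : ℝ) 3) :
    ∀ x₀ : ℝ,
      Tendsto (fun k => (fun x => α * x * (1 - x))^[k] x₀) atTop (𝓝 ((α - 1) / α)) ↔
      x₀ ∈ Set.Ioo (0 : ℝ) 1 := by
  obtain ⟨h1, h3⟩ := hα
  set g : ℝ → ℝ := fun x => α * x * (1 - x) with hg
  set p : ℝ := (α - 1) / α with hp
  have hαpos : (0:ℝ) < α := by linarith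
  have hppos : 0 < p := by
    rw [hp]; exact div_pos (by linarith) hαpos
  have hplt : p < 1 := by
    rw [hp, div_lt_one hαpos]; linarith
  -- basic facts about iterates
  have hg01 : ∀ x ∈ Set.Ioo (0:ℝ) 1, g x ∈ Set.Ioo (0:ℝ) 1 ∧ g x ≤ α / 4 := by
    intro x hx
    have h0 : 0 < g x := by
      simp only [hg]
      exact mul_pos (mul_pos hαpos hx.1) (by linarith [hx.2])
    have h4 : g x ≤ α / 4 := by
      simp only [hg]
      nlinarith [sq_nonneg (x - 1/2), hx.1, hx.2]
    exact ⟨⟨h0, by nlinarith⟩, h4⟩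
  have horbit : ∀ x ∈ Set.Ioo (0:ℝ) 1, ∀ k, g^[k] x ∈ Set.Ioo (0:ℝ) 1 := by
    intro x hx k
    induction k with
    | zero => simpa using hx
    | succ k ih =>
      rw [Function.iterate_succ_apply']
      exact (hg01 _ ih).1
  -- negativity lemma: orbits from negative points don't converge to p
  have hneg : ∀ x : ℝ, x < 0 → ¬ Tendsto (fun k => g^[k] x) atTop (𝓝 p) := by
    intro x hx ht
    have hbound : ∀ k, g^[k] x ≤ α ^ k * x := by
      intro k
      induction k with
      | zero => simp
      | succ k ih =>
        rw [Function.iterate_succ_apply']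
        have hk : g^[k] x ≤ α ^ k * x := ih
        have hkneg : g^[k] x < 0 :=
          lt_of_le_of_lt hk (by nlinarith [pow_pos hαpos k])
        calc g (g^[k] x) = α * (g^[k] x) * (1 - g^[k] x) := rfl
          _ ≤ α * (g^[k] x) := by nlinarith [mul_nonneg hαpos.le (sq_nonneg (g^[k] x))]
          _ ≤ α * (α ^ k * x) := by nlinarith
          _ = α ^ (k + 1) * x := by ring
    have hdown : Tendsto (fun k => α ^ k * x) atTop atBot := by
      exact Tendsto.atTop_mul_const_of_neg hx (tendsto_pow_atTop_atTop_of_one_lt h1)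
    have h1' : ∀ᶠ k in atTop, g^[k] x > p - 1 :=
      ht.eventually (eventually_gt_nhds (by linarith))
    have h2' : ∀ᶠ k in atTop, α ^ k * x < p - 1 := hdown.eventually_lt_atBot _
    obtain ⟨k, hk1, hk2⟩ := (h1'.and h2').exists
    have := hbound k
    linarith
  intro x₀
  constructor
  · -- forward direction
    intro ht
    by_contra hx
    simp only [Set.mem_Ioo, not_and_or, not_lt] at hx
    rcases hx with hx | hx
    · rcases lt_or_eq_of_le hx with hx' | hx'
      · exact hneg x₀ hx' ht
      · -- x₀ = 0
        have : ∀ k, g^[k] x₀ = 0 := by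
          intro k
          rw [hx']
          exact Function.iterate_fixed (by simp [hg]) k
        have h0 : Tendsto (fun k => g^[k] x₀) atTop (𝓝 0) := by
          simp only [this]; exact tendsto_const_nhds
        have := tendsto_nhds_unique ht h0
        linarith
    · rcases lt_or_eq_of_le hx with hx' | hx'
      · -- x₀ > 1
        have hgx : g x₀ < 0 := by
          simp only [hg]
          exact mul_neg_of_pos_of_neg (mul_pos hαpos (by linarith)) (by linarith)
        have ht' : Tendsto (fun k => g^[k] (g x₀)) atTop (𝓝 p) := by
          have := (tendsto_add_atTop_iff_nat 1).mpr ht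
          simpa [Function.iterate_succ_apply] using this
        exact hneg (g x₀) hgx ht'
      · -- x₀ = 1
        have hgx : g x₀ = 0 := by rw [← hx']; simp [hg]
        have : ∀ k, g^[k] (g x₀) = 0 := by
          intro k
          rw [hgx]
          exact Function.iterate_fixed (by simp [hg]) k
        have ht' : Tendsto (fun k => g^[k] (g x₀)) atTop (𝓝 p) := by
          have := (tendsto_add_atTop_iff_nat 1).mpr ht
          simpa [Function.iterate_succ_apply] using this
        have h0 : Tendsto (fun k => g^[k] (g x₀)) atTop (𝓝 0) := by
          simp only [this]; exact tendsto_const_nhds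
        have := tendsto_nhds_unique ht' h0
        linarith
  · -- backward direction
    intro hx₀
    have hgc : Continuous g := by fun_prop
    have hαne : α ≠ 0 := ne_of_gt hαpos
    have hαp : α * p = α - 1 := by rw [hp]; field_simp
    have hfixp : α * p * (1 - p) = p := by linear_combination (-p) * hαp
    -- pick the left endpoint of the trapping interval
    rcases le_total α 2 with hα2 | hα2
    · -- case 1 < α ≤ 2: trapping interval [p, α/4]
      set b : ℝ := α / 4 with hb
      have hpb : p ≤ b := by
        rw [hp, hb, div_le_div_iff₀ hαpos (by norm_num)]
        nlinarith [sq_nonneg (α - 2)]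
      have hp12 : p ≤ 1 / 2 := by
        rw [hp, div_le_iff₀ hαpos]; linarith
      have hinv : ∀ x ∈ Set.Icc p b, g x ∈ Set.Icc p b := by
        intro x hx
        have h1' := hx.1
        have h2' := hx.2
        have hx12 : x ≤ 1 / 2 := by rw [hb] at h2'; linarith
        constructor
        · -- g x ≥ p since g x - p = α(x-p)(1-x-p)
          have key : g x - p = α * (x - p) * (1 - x - p) + (α * p * (1 - p) - p) := by
            simp only [hg]; ring
          rw [hfixp] at key
          nlinarith [mul_nonneg (mul_nonneg hαpos.le (by linarith : (0:ℝ) ≤ x - p))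
            (by linarith : (0:ℝ) ≤ 1 - x - p)]
        · -- g x ≤ α/4
          simp only [hg, hb]
          nlinarith [sq_nonneg (x - 1/2)]
      -- dichotomy
      by_cases hcase : ∃ k, p ≤ g^[k + 1] x₀
      · obtain ⟨k₀, hk₀⟩ := hcase
        set y := g^[k₀ + 1] x₀ with hy
        have hyb : y ≤ b := by
          rw [hy, Function.iterate_succ_apply']
          exact (hg01 _ (horbit x₀ hx₀ k₀)).2
        have hconv : Tendsto (fun j => g^[j] y) atTop (𝓝 p) :=
          lgc_main α h1 h3 p b hppos (Or.inl (by rw [hb]; linarith)) hinv y ⟨hk₀, hyb⟩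
        have : Tendsto (fun j => g^[j + (k₀ + 1)] x₀) atTop (𝓝 p) := by
          have heq : ∀ j, g^[j + (k₀ + 1)] x₀ = g^[j] y := fun j =>
            Function.iterate_add_apply g j (k₀ + 1) x₀
          simpa [heq] using hconv
        exact (tendsto_add_atTop_iff_nat (k₀ + 1)).mp this
      · -- all iterates below p: increasing orbit
        push_neg at hcase
        set u : ℕ → ℝ := fun k => g^[k + 1] x₀ with hu
        have humem : ∀ k, u k ∈ Set.Ioo (0:ℝ) 1 := fun k => horbit x₀ hx₀ (k + 1)
        have husucc : ∀ k, u (k + 1) = g (u k) := by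
          intro k
          simp only [hu, Function.iterate_succ_apply']
        have hm : Monotone u := by
          apply monotone_nat_of_le_succ
          intro k
          rw [husucc k]
          have h0 := (humem k).1
          have hlt : u k < p := hcase k
          have hau : α * u k < α - 1 := by
            rw [← hαp]
            exact (mul_lt_mul_iff_right₀ hαpos).mpr hlt
          simp only [hg]
          nlinarith
        obtain ⟨L, hL, hfixx, hL0, hLb⟩ :=
          lgc_conv_mono hgc u husucc hm p (fun n => le_of_lt (hcase n))
        have hLpos : 0 < L := lt_of_lt_of_le (humem 0).1 hL0
        have : L = p := lgc_fix α h1 hLpos hfixx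
        rw [this] at hL
        exact (tendsto_add_atTop_iff_nat 1).mp hL
    · -- case 2 ≤ α < 3: trapping interval [g(α/4), α/4]
      obtain ⟨b, hb⟩ : ∃ t : ℝ, t = α / 4 := ⟨_, rfl⟩
      obtain ⟨a, ha⟩ : ∃ t : ℝ, t = α * b * (1 - b) := ⟨_, rfl⟩
      have hb12 : 1 / 2 ≤ b := by rw [hb]; linarith
      have hb34 : b < 1 := by rw [hb]; linarith
      have ha12 : 1 / 2 ≤ a := by
        rw [ha, hb]
        nlinarith [sq_nonneg (α - 2)]
      have hap : a ≤ p := by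
        -- a - p = -(b - p)(αb - 1), b ≥ p, αb = α²/4 ≥ 1
        have hpb : p ≤ b := by
          rw [hp, hb, div_le_div_iff₀ hαpos (by norm_num)]
          nlinarith [sq_nonneg (α - 2)]
        have habb : 1 ≤ α * b := by rw [hb]; nlinarith
        have key : a - p = -(b - p) * (α * b - 1) := by
          rw [ha, hb, hp]; field_simp; ring
        nlinarith [mul_nonneg (by linarith : (0:ℝ) ≤ b - p) (by linarith : (0:ℝ) ≤ α * b - 1)]
      have hab : a ≤ b := by
        rw [ha, hb]; nlinarith [sq_nonneg (α - 2)]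
      have hinv : ∀ x ∈ Set.Icc a b, g x ∈ Set.Icc a b := by
        intro x hx
        have hx1 := hx.1
        have hx2 := hx.2
        constructor
        · -- g x ≥ a = g b since g decreasing on [1/2, 1] and x ≤ b
          have key : g x - a = α * (b - x) * (x + b - 1) := by
            simp only [hg, ha]; ring
          have : 0 ≤ α * (b - x) * (x + b - 1) :=
            mul_nonneg (mul_nonneg hαpos.le (by linarith)) (by linarith)
          linarith
        · have key2 : α * x * (1 - x) + α * (x - 1/2)^2 = α/4 := by ring
          have hnn : 0 ≤ α * (x - 1/2)^2 := by positivity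
          simp only [hg, hb]
          linarith
      have ha0 : 0 < a := by linarith
      by_cases hcase : ∃ k, a ≤ g^[k + 1] x₀
      · obtain ⟨k₀, hk₀⟩ := hcase
        set y := g^[k₀ + 1] x₀ with hy
        have hyb : y ≤ b := by
          rw [hy, Function.iterate_succ_apply', hb]
          exact (hg01 _ (horbit x₀ hx₀ k₀)).2
        have hconv : Tendsto (fun j => g^[j] y) atTop (𝓝 p) :=
          lgc_main α h1 h3 a b ha0 (Or.inr ha12) hinv y ⟨hk₀, hyb⟩
        have : Tendsto (fun j => g^[j + (k₀ + 1)] x₀) atTop (𝓝 p) := by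
          have heq : ∀ j, g^[j + (k₀ + 1)] x₀ = g^[j] y := fun j =>
            Function.iterate_add_apply g j (k₀ + 1) x₀
          simpa [heq] using hconv
        exact (tendsto_add_atTop_iff_nat (k₀ + 1)).mp this
      · push_neg at hcase
        set u : ℕ → ℝ := fun k => g^[k + 1] x₀ with hu
        have humem : ∀ k, u k ∈ Set.Ioo (0:ℝ) 1 := fun k => horbit x₀ hx₀ (k + 1)
        have husucc : ∀ k, u (k + 1) = g (u k) := by
          intro k
          simp only [hu, Function.iterate_succ_apply']
        have hm : Monotone u := by
          apply monotone_nat_of_le_succ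
          intro k
          rw [husucc k]
          have h0 := (humem k).1
          have hlt : u k < a := hcase k
          have hltp : u k < p := lt_of_lt_of_le hlt hap
          have hau : α * u k < α - 1 := by
            rw [← hαp]
            exact (mul_lt_mul_iff_right₀ hαpos).mpr hltp
          simp only [hg]
          nlinarith
        obtain ⟨L, hL, hfixx, hL0, hLb⟩ :=
          lgc_conv_mono hgc u husucc hm a (fun n => le_of_lt (hcase n))
        have hLpos : 0 < L := lt_of_lt_of_le (humem 0).1 hL0
        have : L = p := lgc_fix α h1 hLpos hfixx
        rw [this] at hL
        exact (tendsto_add_atTop_iff_nat 1).mp hL
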